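/- Self-duality criterion: in the single-variable case with t = 1, if f g ≡ λ L′ (mod L) for some λ ∈ F_q^* where L(x) = ∏_{s∈S}(x−s), and f = g with 2·deg g = n, then GRS(S, deg g, g) is self-dual. -/

import Mathlib

/-- The generalized Reed–Solomon code `GRS(S,k,g) = {(h(sᵢ)/g(sᵢ))ᵢ : deg h < k}`. -/
def GRSset (F : Type*) [Field F] (n k : ℕ) (s : Fin n → F) (g : Polynomial F) :
    Set (Fin n → F) :=
  {c | ∃ h : Polynomial F, h.degree < (k : WithBot ℕ) ∧
      ∀ i, c i = h.eval (s i) / g.eval (s i)}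

open Polynomial Lagrange Finset

lemma leadingCoeff_basisDivisor {F : Type*} [Field F] {x y : F} (h : x ≠ y) :
    (Lagrange.basisDivisor x y).leadingCoeff = (x - y)⁻¹ := by
  unfold Lagrange.basisDivisor
  rw [leadingCoeff_mul, leadingCoeff_C, (monic_X_sub_C y).leadingCoeff, mul_one]

lemma coeff_lagrange_basis {F : Type*} [Field F] {ι : Type*} [DecidableEq ι]
    {s : Finset ι} {v : ι → F} (hvs : Set.InjOn v s) {i : ι} (hi : i ∈ s) :
    (Lagrange.basis s v i).coeff (s.card - 1) = Lagrange.nodalWeight s v i := by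
  have hdeg := Lagrange.natDegree_basis hvs hi
  rw [← hdeg, Polynomial.coeff_natDegree]
  unfold Lagrange.basis Lagrange.nodalWeight
  rw [Polynomial.leadingCoeff_prod]
  refine Finset.prod_congr rfl fun j hj => ?_
  exact leadingCoeff_basisDivisor
    (fun h => (Finset.mem_erase.mp hj).1 (hvs (Finset.mem_erase.mp hj).2 hi h.symm))

/-- Key lemma: the weighted sum `∑ p(vᵢ)·wᵢ` vanishes for `deg p < n - 1`, where
`wᵢ` are the nodal weights. -/
lemma sum_eval_mul_nodalWeight_eq_zero {F : Type*} [Field F] {n : ℕ}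
    (v : Fin n → F) (hv : Function.Injective v) (p : Polynomial F)
    (hp : p.degree < ((n - 1 : ℕ) : WithBot ℕ)) :
    ∑ i, p.eval (v i) * Lagrange.nodalWeight Finset.univ v i = 0 := by
  rcases Nat.eq_zero_or_pos n with hn | hn
  · subst hn; simp
  have hcard : (Finset.univ : Finset (Fin n)).card = n := by simp
  have hvs : Set.InjOn v (Finset.univ : Finset (Fin n)) := hv.injOn
  have hplt : p.degree < ((Finset.univ : Finset (Fin n)).card : WithBot ℕ) := by
    rw [hcard]
    exact lt_of_lt_of_le hp (by exact_mod_cast Nat.sub_le n 1)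
  have hpi := Lagrange.eq_interpolate hvs hplt
  have hc : p.coeff (n - 1) = 0 :=
    Polynomial.coeff_eq_zero_of_degree_lt hp
  rw [hpi, Lagrange.interpolate_apply, Polynomial.finset_sum_coeff] at hc
  rw [← hc]
  refine Finset.sum_congr rfl fun i _ => ?_
  rw [Polynomial.coeff_C_mul]
  congr 1
  have := coeff_lagrange_basis hvs (Finset.mem_univ i)
  rw [hcard] at this
  exact this.symm

/-- Self-duality criterion (single variable, `t = 1`): if `g·g ≡ λ L′ (mod L)` for
some `λ ∈ F_q^*`, where `L(x) = ∏_{s∈S}(x−s)`, and `2·deg g = n`, then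
`GRS(S, deg g, g)` is self-dual. -/
theorem stmt_18 {F : Type*} [Field F] [Fintype F] (n : ℕ)
    (s : Fin n → F) (hs : Function.Injective s)
    (g : Polynomial F) (hg : ∀ i, g.eval (s i) ≠ 0)
    (hdeg : 2 * g.natDegree = n)
    (lam : F) (hlam : lam ≠ 0)
    (hcong : (∏ i, (Polynomial.X - Polynomial.C (s i))) ∣
      (g * g - Polynomial.C lam *
        Polynomial.derivative (∏ i, (Polynomial.X - Polynomial.C (s i))))) :
    GRSset F n g.natDegree s g =
      {w | ∀ c ∈ GRSset F n g.natDegree s g, ∑ i, w i * c i = 0} := by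
  classical
  set k := g.natDegree with hk
  -- the nodal polynomial
  set L : Polynomial F := ∏ i, (Polynomial.X - Polynomial.C (s i)) with hL
  have hLnodal : L = Lagrange.nodal Finset.univ s := by
    rw [hL, Lagrange.nodal_eq]
  -- evaluation identity: g(sᵢ)² = λ·L′(sᵢ)
  have heval : ∀ i, g.eval (s i) * g.eval (s i) =
      lam * (Polynomial.derivative L).eval (s i) := by
    intro i
    obtain ⟨q, hq⟩ := hcong
    have hLz : L.eval (s i) = 0 := by
      rw [hLnodal]; exact Lagrange.eval_nodal_at_node (Finset.mem_univ i)
    have := congrArg (Polynomial.eval (s i)) hq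
    simp only [Polynomial.eval_mul, Polynomial.eval_sub, Polynomial.eval_C, hLz,
      zero_mul] at this
    exact sub_eq_zero.mp this
  have hL' : ∀ i, (Polynomial.derivative L).eval (s i) ≠ 0 := by
    intro i h
    have h2 := heval i
    rw [h, mul_zero] at h2
    exact hg i (mul_self_eq_zero.mp h2)
  -- inverse identity: g(sᵢ)⁻¹ * g(sᵢ)⁻¹ = λ⁻¹ * nodalWeight i
  have hinv : ∀ i, (g.eval (s i))⁻¹ * (g.eval (s i))⁻¹ =
      lam⁻¹ * Lagrange.nodalWeight Finset.univ s i := by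
    intro i
    rw [Lagrange.nodalWeight_eq_eval_derivative_nodal (Finset.mem_univ i), ← hLnodal,
      ← mul_inv, heval i, mul_inv]
  -- the evaluation linear map
  let φ : Polynomial F →ₗ[F] (Fin n → F) :=
    { toFun := fun h i => h.eval (s i) * (g.eval (s i))⁻¹
      map_add' := by intro a b; funext i; simp [add_mul]
      map_smul' := by intro c a; funext i; simp [mul_assoc] }
  -- the code as a submodule
  let C : Submodule F (Fin n → F) := (Polynomial.degreeLT F k).map φ
  have hCset : GRSset F n k s g = ↑C := by
    ext c
    constructor
    · rintro ⟨h, hd, hc⟩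
      refine ⟨h, Polynomial.mem_degreeLT.mpr hd, funext fun i => ?_⟩
      show h.eval (s i) * (g.eval (s i))⁻¹ = c i
      rw [hc i, div_eq_mul_inv]
    · rintro ⟨h, hd, rfl⟩
      exact ⟨h, Polynomial.mem_degreeLT.mp hd, fun i => by simp [φ, div_eq_mul_inv]⟩
  -- the bilinear form
  let B : LinearMap.BilinForm F (Fin n → F) :=
    LinearMap.mk₂ F (fun w c => ∑ i, w i * c i)
      (fun a b c => by simp [add_mul, Finset.sum_add_distrib])
      (fun r a c => by simp [Finset.mul_sum, mul_assoc])
      (fun a b c => by simp [mul_add, Finset.sum_add_distrib])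
      (fun r a c => by simp [Finset.mul_sum]; ring_nf; simp [mul_comm, mul_left_comm])
  have hBapp : ∀ w c, B w c = ∑ i, w i * c i := fun _ _ => rfl
  have hBsymm : ∀ w c, B w c = B c w := by
    intro w c; simp only [hBapp]; exact Finset.sum_congr rfl fun i _ => mul_comm _ _
  have hBrefl : B.IsRefl := fun w c h => by rw [← hBsymm]; exact h
  have hBnd : B.Nondegenerate := by
    refine (LinearMap.IsRefl.nondegenerate_iff_separatingLeft hBrefl).mpr ?_
    intro w hw
    funext j
    have := hw (Pi.single j 1)
    simpa [hBapp, Pi.single_apply, mul_comm] using this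
  -- orthogonality: C ≤ B.orthogonal C
  have hle : C ≤ B.orthogonal C := by
    rintro _ ⟨h₁, hh₁, rfl⟩ _ ⟨h₂, hh₂, rfl⟩
    show B (φ h₂) (φ h₁) = 0
    rw [hBapp]
    have hterm : ∀ i, φ h₂ i * φ h₁ i =
        lam⁻¹ * ((h₂ * h₁).eval (s i) * Lagrange.nodalWeight Finset.univ s i) := by
      intro i
      simp only [φ, LinearMap.coe_mk, AddHom.coe_mk, Polynomial.eval_mul]
      rw [show h₂.eval (s i) * (g.eval (s i))⁻¹ * (h₁.eval (s i) * (g.eval (s i))⁻¹)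
          = h₂.eval (s i) * h₁.eval (s i) * ((g.eval (s i))⁻¹ * (g.eval (s i))⁻¹) by ring,
        hinv i]
      ring
    simp only [hterm]
    rw [← Finset.mul_sum, sum_eval_mul_nodalWeight_eq_zero s hs]
    · rw [mul_zero]
    · -- degree bound: deg (h₂ h₁) < n - 1
      rcases eq_or_ne (h₂ * h₁) 0 with h0 | h0
      · rw [h0, Polynomial.degree_zero]
        exact WithBot.bot_lt_coe _
      have hne₁ : h₁ ≠ 0 := fun h => h0 (by rw [h, mul_zero])
      have hne₂ : h₂ ≠ 0 := fun h => h0 (by rw [h, zero_mul])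
      have hd₁ : h₁.natDegree < k := (Polynomial.natDegree_lt_iff_degree_lt hne₁).mpr
        (Polynomial.mem_degreeLT.mp hh₁)
      have hd₂ : h₂.natDegree < k := (Polynomial.natDegree_lt_iff_degree_lt hne₂).mpr
        (Polynomial.mem_degreeLT.mp hh₂)
      rw [Polynomial.degree_eq_natDegree h0, Polynomial.natDegree_mul hne₂ hne₁]
      exact_mod_cast by omega
  -- dimension of C
  have hkn : k ≤ n := by omega
  have hφinj : Function.Injective (φ.comp (Polynomial.degreeLT F k).subtype) := by
    rw [← LinearMap.ker_eq_bot, LinearMap.ker_eq_bot']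
    rintro ⟨h, hh⟩ hz
    have hz' : ∀ i, h.eval (s i) = 0 := by
      intro i
      have := congrFun hz i
      simp only [φ, LinearMap.comp_apply, Submodule.subtype_apply,
        LinearMap.coe_mk, AddHom.coe_mk] at this
      exact (mul_eq_zero.mp this).resolve_right (inv_ne_zero (hg i))
    have : h = 0 := by
      refine Polynomial.eq_zero_of_degree_lt_of_eval_index_eq_zero (v := s) Finset.univ hs.injOn ?_
        (fun i _ => hz' i)
      calc h.degree < (k : WithBot ℕ) := Polynomial.mem_degreeLT.mp hh
        _ ≤ ((Finset.univ : Finset (Fin n)).card : WithBot ℕ) := by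
            simp only [Finset.card_univ, Fintype.card_fin]; exact_mod_cast hkn
    exact Subtype.ext this
  have hCrange : C = LinearMap.range (φ.comp (Polynomial.degreeLT F k).subtype) := by
    rw [LinearMap.range_comp, Submodule.range_subtype]
  have hfinC : Module.finrank F C = k := by
    rw [hCrange, LinearMap.finrank_range_of_inj hφinj]
    have := (Polynomial.degreeLTEquiv F k).finrank_eq
    rw [this, Module.finrank_fin_fun]
  -- dimension of the orthogonal complement
  have hfinO : Module.finrank F (B.orthogonal C) = k := by
    rw [LinearMap.BilinForm.finrank_orthogonal hBnd C, hfinC,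
      Module.finrank_fin_fun]
    omega
  have hCeq : C = B.orthogonal C :=
    Submodule.eq_of_le_of_finrank_le hle (by rw [hfinC, hfinO])
  -- conclude
  rw [hCset]
  ext w
  simp only [Set.mem_setOf_eq, SetLike.mem_coe]
  constructor
  · intro hw c hc
    have h1 : w ∈ B.orthogonal C := hCeq ▸ hw
    have h2 : B c w = 0 := h1 c hc
    rw [show (∑ i, w i * c i) = B w c from rfl, hBsymm]
    exact h2
  · intro hw
    have : w ∈ B.orthogonal C := by
      intro c hc
      show B c w = 0
      rw [hBsymm c w]
      exact hw c hc
    rw [hCeq]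
    exact this
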